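/- Under the sequential model with Assumption 1, fix α, β ∈ (0,1) and m ∈ ℕ. For each n define r_n = r((t_n^1, …, t_n^m), α) and a_n = a((t_n^1, …, t_n^m), β), and define the oracle stopping time τ = inf{n ∈ ℕ : r_n + a_n ≥ m}. Then P(τ < ∞) = 1. -/

import Mathlib

open MeasureTheory Filter

/-- Order statistics of a finite tuple: the `i`-th smallest value (0-indexed). -/
noncomputable def ordStat {m : ℕ} (t : Fin m → ℝ) : Fin m → ℝ :=
  t ∘ Tuple.sort t

/-- Cumulative average of the `q` smallest values, `(1/q) * ∑_{l=1}^q t^{(l)}`. -/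
noncomputable def cumAvgLow {m : ℕ} (t : Fin m → ℝ) (q : ℕ) : ℝ :=
  (∑ i : Fin m, if (i : ℕ) < q then ordStat t i else 0) / q

/-- Cumulative average of `1 - (value)` over the `q` largest values,
`(1/q) * ∑_{l=1}^q (1 - t^{(m-l+1)})`. -/
noncomputable def cumAvgHigh {m : ℕ} (t : Fin m → ℝ) (q : ℕ) : ℝ :=
  (∑ i : Fin m, if m - q ≤ (i : ℕ) then 1 - ordStat t i else 0) / q

/-- `r(t, α) = max {q ∈ {1,…,m} : (1/q) ∑_{l=1}^q t^{(l)} ≤ α}`, `0` if no such `q`. -/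
noncomputable def rIdx {m : ℕ} (t : Fin m → ℝ) (α : ℝ) : ℕ :=
  sSup {q : ℕ | 1 ≤ q ∧ q ≤ m ∧ cumAvgLow t q ≤ α}

/-- `a(t, β) = max {q ∈ {1,…,m} : (1/q) ∑_{l=1}^q (1 - t^{(m-l+1)}) ≤ β}`, `0` if no such `q`. -/
noncomputable def aIdx {m : ℕ} (t : Fin m → ℝ) (β : ℝ) : ℕ :=
  sSup {q : ℕ | 1 ≤ q ∧ q ≤ m ∧ cumAvgHigh t q ≤ β}

/-- Adaptive lower cutoff `t^l`: `t^{(r+1)}` if `r < m`, and `1` if `r = m`. -/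
noncomputable def lowerCut {m : ℕ} (t : Fin m → ℝ) (α : ℝ) : ℝ :=
  if h : rIdx t α < m then ordStat t ⟨rIdx t α, h⟩ else 1

/-- Adaptive upper cutoff `t^u`: `t^{(m-a)}` if `a < m`, and `0` if `a = m`. -/
noncomputable def upperCut {m : ℕ} (t : Fin m → ℝ) (β : ℝ) : ℝ :=
  if h : aIdx t β < m then ordStat t ⟨m - 1 - aIdx t β, by omega⟩ else 0

/-- The `k`-th order statistic with 1-based index `k` (junk value `1` out of range). -/
noncomputable def ordStatN {m : ℕ} (t : Fin m → ℝ) (k : ℕ) : ℝ :=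
  if h : k - 1 < m then ordStat t ⟨k - 1, h⟩ else 1

/-- Empirical running-average functional `Q(u)` (equal to `0` below `t^{(1)}`,
using the convention `0/0 = 0`). -/
noncomputable def Qlow {m : ℕ} (t : Fin m → ℝ) (u : ℝ) : ℝ :=
  (∑ j : Fin m, if t j ≤ u then t j else 0) / (∑ j : Fin m, if t j ≤ u then (1:ℝ) else 0)

/-- Empirical running-average functional `Q'(u)` (equal to `0` above `t^{(m)}`,
using the convention `0/0 = 0`). -/
noncomputable def Qhigh {m : ℕ} (t : Fin m → ℝ) (u : ℝ) : ℝ :=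
  (∑ j : Fin m, if u ≤ t j then 1 - t j else 0) / (∑ j : Fin m, if u ≤ t j then (1:ℝ) else 0)

open scoped Classical

lemma card_perm {m : ℕ} (t : Fin m → ℝ) (p : ℝ → Prop) :
    Fintype.card {i // p (ordStat t i)} = Fintype.card {i // p (t i)} :=
  Fintype.card_congr (Equiv.subtypeEquiv (Tuple.sort t) (fun _ => Iff.rfl))

lemma card_filter_val_lt {m k : ℕ} (hk : k ≤ m) :
    (Finset.univ.filter fun i : Fin m => (i : ℕ) < k).card = k := by
  have h := Finset.card_bij (s := Finset.univ.filter fun i : Fin m => (i : ℕ) < k)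
    (t := (Finset.univ : Finset (Fin k)))
    (fun i hi => (⟨(i : ℕ), by simpa using hi⟩ : Fin k))
    (fun a ha => Finset.mem_univ _)
    (fun a ha b hb hab => by simpa [Fin.ext_iff] using congrArg Fin.val hab)
    (fun b _ => ⟨⟨(b : ℕ), lt_of_lt_of_le b.2 hk⟩, by simp [b.2], rfl⟩)
  simpa using h

lemma apply_ge_of_monotone {m : ℕ} (f : Fin m → ℝ) (a : ℝ) (hf : Monotone f)
    (j : Fin m) (hj : m ≤ (j : ℕ) + Fintype.card {i // a ≤ f i}) : a ≤ f j := by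
  by_contra hc
  push_neg at hc
  have hsub : (Finset.univ.filter fun i : Fin m => a ≤ f i) ⊆ Finset.Ioi j := by
    intro i hi
    simp only [Finset.mem_filter] at hi
    simp only [Finset.mem_Ioi]
    by_contra hij
    push_neg at hij
    exact absurd (le_trans hi.2 (hf hij)) (not_le.mpr hc)
  have h1 : Fintype.card {i // a ≤ f i} ≤ m - 1 - (j : ℕ) := by
    rw [Fintype.card_subtype]
    simpa [Fin.card_Ioi] using Finset.card_le_card hsub
  have := j.2
  omega

lemma key_det {m : ℕ} (t : Fin m → ℝ) {α β ε : ℝ} (hε : 0 < ε) (hεα : ε ≤ α) (hεβ : ε ≤ β)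
    (h : ∀ i, t i ≤ ε ∨ 1 - ε ≤ t i) : m ≤ rIdx t α + aIdx t β := by
  rcases Nat.eq_zero_or_pos m with hm | hm
  · omega
  set k := Fintype.card {i // t i ≤ ε} with hkdef
  have hkm : k ≤ m := by
    simpa using Fintype.card_subtype_le (fun i : Fin m => t i ≤ ε)
  have hmono : Monotone (ordStat t) := Tuple.monotone_sort t
  have hordlow : ∀ j : Fin m, (j : ℕ) < k → ordStat t j ≤ ε := by
    intro j hj
    refine (Tuple.lt_card_le_iff_apply_le_of_monotone (f := ordStat t) (a := ε) (j := j) hmono).mp ?_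
    convert hj using 1
    rw [hkdef, ← card_perm t (fun x => x ≤ ε), Fintype.card_subtype]
  have hordhigh : ∀ j : Fin m, k ≤ (j : ℕ) → 1 - ε ≤ ordStat t j := by
    intro j hj
    have hcompl : Fintype.card {i // ¬ t i ≤ ε} = m - k := by
      rw [Fintype.card_subtype_compl]
      simp
      rfl
    have hmono2 : m - k ≤ Fintype.card {i // 1 - ε ≤ t i} := by
      rw [← hcompl]
      exact Fintype.card_subtype_mono _ _ (fun i hi => (h i).resolve_left hi)
    refine apply_ge_of_monotone (ordStat t) (1 - ε) hmono j ?_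
    rw [card_perm t (fun x => 1 - ε ≤ x)]
    omega
  have hr : k ≠ 0 → k ≤ rIdx t α := by
    intro h0
    have hmem : k ∈ {q : ℕ | 1 ≤ q ∧ q ≤ m ∧ cumAvgLow t q ≤ α} := by
      refine ⟨by omega, hkm, ?_⟩
      unfold cumAvgLow
      rw [div_le_iff₀ (by positivity)]
      calc (∑ i : Fin m, if (i : ℕ) < k then ordStat t i else 0)
          ≤ ∑ i : Fin m, if (i : ℕ) < k then ε else 0 := by
            refine Finset.sum_le_sum fun i _ => ?_
            split
            · exact hordlow i (by assumption)
            · exact le_rfl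
          _ = (Finset.univ.filter fun i : Fin m => (i : ℕ) < k).card * ε := by
            rw [← Finset.sum_filter, Finset.sum_const, nsmul_eq_mul]
          _ = k * ε := by rw [card_filter_val_lt hkm]
          _ ≤ α * k := by
            rw [mul_comm]
            exact mul_le_mul_of_nonneg_right hεα (by positivity)
    rw [show k ≤ rIdx t α ↔ k ≤ rIdx t α from Iff.rfl]
    unfold rIdx
    exact le_csSup ⟨m, fun q hq => hq.2.1⟩ hmem
  have ha : k ≠ m → m - k ≤ aIdx t β := by
    intro h1
    have hcard2 : (Finset.univ.filter fun i : Fin m => k ≤ (i : ℕ)).card = m - k := by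
      have htot := Finset.card_filter_add_card_filter_not
        (s := (Finset.univ : Finset (Fin m))) (p := fun i : Fin m => k ≤ (i : ℕ))
      have hneg : (Finset.univ.filter fun i : Fin m => ¬ k ≤ (i : ℕ)).card = k := by
        simp only [not_le]
        exact card_filter_val_lt hkm
      simp only [Finset.card_univ, Fintype.card_fin] at htot
      omega
    have hmem : m - k ∈ {q : ℕ | 1 ≤ q ∧ q ≤ m ∧ cumAvgHigh t q ≤ β} := by
      refine ⟨by omega, by omega, ?_⟩
      unfold cumAvgHigh
      rw [div_le_iff₀ (show (0:ℝ) < ((m - k : ℕ) : ℝ) by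
        exact_mod_cast Nat.sub_pos_of_lt (lt_of_le_of_ne hkm h1))]
      have hmk : m - (m - k) = k := by omega
      calc (∑ i : Fin m, if m - (m - k) ≤ (i : ℕ) then 1 - ordStat t i else 0)
          ≤ ∑ i : Fin m, if m - (m - k) ≤ (i : ℕ) then ε else 0 := by
            refine Finset.sum_le_sum fun i _ => ?_
            split
            · rename_i hki
              rw [hmk] at hki
              linarith [hordhigh i hki]
            · exact le_rfl
          _ = (Finset.univ.filter fun i : Fin m => m - (m - k) ≤ (i : ℕ)).card * ε := by
            rw [← Finset.sum_filter, Finset.sum_const, nsmul_eq_mul]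
          _ = ((m - k : ℕ) : ℝ) * ε := by
            simp only [hmk]
            rw [hcard2]
          _ ≤ β * ((m - k : ℕ) : ℝ) := by
            rw [mul_comm]
            exact mul_le_mul_of_nonneg_right hεβ (Nat.cast_nonneg _)
    unfold aIdx
    exact le_csSup ⟨m, fun q hq => hq.2.1⟩ hmem
  by_cases h0 : k = 0
  · have := ha (by omega); omega
  by_cases h1 : k = m
  · have := hr h0; omega
  · have := hr h0; have := ha h1; omega

/-- **Theorem 1, first assertion.** Under Assumption 1, the oracle stopping time
`τ = inf{n : r_n + a_n ≥ m}` is almost surely finite. -/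
theorem stmt_4 {Ω : Type*} {F : MeasurableSpace Ω} {μ : Measure Ω} [IsProbabilityMeasure μ]
    (σa : ℕ → MeasurableSpace Ω) (hσmono : Monotone σa) (hσle : ∀ n, σa n ≤ F)
    {m : ℕ} (θ : Fin m → Ω → ℝ) (hθmeas : ∀ i, Measurable (θ i))
    (hθ01 : ∀ i ω, θ i ω = 0 ∨ θ i ω = 1)
    (t : ℕ → Fin m → Ω → ℝ)
    (ht01 : ∀ n i ω, t n i ω ∈ Set.Icc (0:ℝ) 1)
    (htmeas : ∀ n i, Measurable[σa n] (t n i))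
    (hver : ∀ n i, t n i =ᵐ[μ] μ[fun ω => 1 - θ i ω|σa n])
    (hasm1a : ∀ i, ∀ ε > (0:ℝ),
      Tendsto (fun n => μ {ω | θ i ω = 0 ∧ t n i ω < 1 - ε}) atTop (nhds 0))
    (hasm1b : ∀ i, ∀ ε > (0:ℝ),
      Tendsto (fun n => μ {ω | θ i ω = 1 ∧ ε < t n i ω}) atTop (nhds 0))
    (α β : ℝ) (hα : α ∈ Set.Ioo (0:ℝ) 1) (hβ : β ∈ Set.Ioo (0:ℝ) 1) :
    μ {ω | ∃ n, m ≤ rIdx (fun i => t n i ω) α + aIdx (fun i => t n i ω) β} = 1 := by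

  classical
  set G := {ω | ∃ n, m ≤ rIdx (fun i => t n i ω) α + aIdx (fun i => t n i ω) β} with hG
  set ε := min α β with hεdef
  have hε : 0 < ε := lt_min hα.1 hβ.1
  have hsub : ∀ n, Gᶜ ⊆
      ⋃ i, ({ω | θ i ω = 0 ∧ t n i ω < 1 - ε} ∪ {ω | θ i ω = 1 ∧ ε < t n i ω}) := by
    intro n ω hω
    by_contra hB
    simp only [Set.mem_iUnion, Set.mem_union, Set.mem_setOf_eq, not_exists, not_or,
      not_and, not_lt] at hB
    refine hω ⟨n, key_det _ hε (min_le_left _ _) (min_le_right _ _) ?_⟩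
    intro i
    rcases hθ01 i ω with h0 | h1
    · exact Or.inr ((hB i).1 h0)
    · exact Or.inl ((hB i).2 h1)
  have hle : ∀ n, μ Gᶜ ≤ ∑ i : Fin m,
      (μ {ω | θ i ω = 0 ∧ t n i ω < 1 - ε} + μ {ω | θ i ω = 1 ∧ ε < t n i ω}) := by
    intro n
    refine (measure_mono (hsub n)).trans ((measure_iUnion_le _).trans ?_)
    rw [tsum_fintype]
    exact Finset.sum_le_sum fun i _ => measure_union_le _ _
  have htend : Tendsto (fun n => ∑ i : Fin m,
      (μ {ω | θ i ω = 0 ∧ t n i ω < 1 - ε} + μ {ω | θ i ω = 1 ∧ ε < t n i ω}))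
      atTop (nhds 0) := by
    have h := tendsto_finset_sum (Finset.univ : Finset (Fin m))
      (fun i _ => ((hasm1a i ε hε).add (hasm1b i ε hε)))
    simpa using h
  have hnull : μ Gᶜ = 0 :=
    le_antisymm (ge_of_tendsto' htend hle) zero_le
  have h1 : 1 ≤ μ G := by
    calc (1 : ENNReal) = μ (G ∪ Gᶜ) := by rw [Set.union_compl_self, measure_univ]
      _ ≤ μ G + μ Gᶜ := measure_union_le _ _
      _ = μ G := by rw [hnull, add_zero]
  exact le_antisymm prob_le_one h1
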